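/- (Second order estimate for dual quantization.) Let F : ℝ → ℝ be continuously differentiable with L-Lipschitz derivative F′. Let X be a real random variable with P(X ∈ [a,b]) = 1 and let Λ be uniformly distributed on [0,1] and independent of X. Then for every grid Γ in [a,b]: |E F(X) − E F(J_Γ(X,Λ))| ≤ L · E|X − J_Γ(X,Λ)|². -/

import Mathlib

open MeasureTheory ProbabilityTheory

/-- Index `j*(ξ)` of the segment `[x_j, x_{j+1})` of the grid containing `ξ`
(with default value `N`, corresponding to the closed last segment). -/
noncomputable def jstar (N : ℕ) (x : ℕ → ℝ) (ξ : ℝ) : ℕ :=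
  if h : ∃ j, j ≤ N ∧ x j ≤ ξ ∧ ξ < x (j + 1) then h.choose else N

/-- The dual quantization operator `J_Γ(ξ, λ)` associated with the grid
`x 0 ≤ x 1 ≤ … ≤ x (N+1)`. -/
noncomputable def dualQ (N : ℕ) (x : ℕ → ℝ) (ξ lam : ℝ) : ℝ :=
  if x (jstar N x ξ + 1) = x (jstar N x ξ) then ξ
  else if lam < (x (jstar N x ξ + 1) - ξ) / (x (jstar N x ξ + 1) - x (jstar N x ξ)) then
    x (jstar N x ξ)
  else x (jstar N x ξ + 1)

lemma jstar_le (N : ℕ) (x : ℕ → ℝ) (ξ : ℝ) : jstar N x ξ ≤ N := by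
  unfold jstar
  split_ifs with h
  · exact h.choose_spec.1
  · exact le_rfl

lemma x_mono {N : ℕ} {x : ℕ → ℝ} (hmono : ∀ j ≤ N, x j ≤ x (j + 1)) :
    ∀ {i j : ℕ}, i ≤ j → j ≤ N + 1 → x i ≤ x j := by
  intro i j hij hj
  induction j, hij using Nat.le_induction with
  | base => exact le_rfl
  | succ j hij ih => exact (ih (by omega)).trans (hmono j (by omega))

lemma x_mem {N : ℕ} {x : ℕ → ℝ} {a b : ℝ} (hmono : ∀ j ≤ N, x j ≤ x (j + 1))
    (hx0 : x 0 = a) (hxN : x (N + 1) = b) {j : ℕ} (hj : j ≤ N + 1) :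
    x j ∈ Set.Icc a b :=
  ⟨hx0 ▸ x_mono hmono (Nat.zero_le _) hj, hxN ▸ x_mono hmono hj le_rfl⟩

lemma jstar_sandwich {N : ℕ} {x : ℕ → ℝ} {a b : ℝ} (hmono : ∀ j ≤ N, x j ≤ x (j + 1))
    (hx0 : x 0 = a) (hxN : x (N + 1) = b) {ξ : ℝ} (hξ : ξ ∈ Set.Icc a b) :
    x (jstar N x ξ) ≤ ξ ∧ ξ ≤ x (jstar N x ξ + 1) := by
  unfold jstar
  split_ifs with h
  · exact ⟨h.choose_spec.2.1, h.choose_spec.2.2.le⟩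
  · push_neg at h
    have claim : ∀ j ≤ N + 1, x j ≤ ξ := by
      intro j hj
      induction j with
      | zero => exact hx0 ▸ hξ.1
      | succ j ih => exact h j (by omega) (ih (by omega))
    exact ⟨claim N (by omega), hxN ▸ hξ.2⟩

lemma jstar_unique {N : ℕ} {x : ℕ → ℝ} (hmono : ∀ j ≤ N, x j ≤ x (j + 1)) {ξ : ℝ}
    {i j : ℕ} (hi : i ≤ N ∧ x i ≤ ξ ∧ ξ < x (i + 1)) (hj : j ≤ N ∧ x j ≤ ξ ∧ ξ < x (j + 1)) :
    i = j := by
  by_contra hne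
  rcases Nat.lt_or_ge i j with hlt | hge
  · have : x (i + 1) ≤ x j := x_mono hmono (by omega) (by omega)
    linarith [hi.2.2, hj.2.1]
  · have hlt : j < i := by omega
    have : x (j + 1) ≤ x i := x_mono hmono (by omega) (by omega)
    linarith [hj.2.2, hi.2.1]

lemma jstar_eq_iff {N : ℕ} {x : ℕ → ℝ} (hmono : ∀ j ≤ N, x j ≤ x (j + 1)) (ξ : ℝ) (n : ℕ) :
    jstar N x ξ = n ↔
      (n ≤ N ∧ x n ≤ ξ ∧ ξ < x (n + 1)) ∨
      (n = N ∧ ¬ ∃ j, j ≤ N ∧ x j ≤ ξ ∧ ξ < x (j + 1)) := by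
  unfold jstar
  split_ifs with h
  · constructor
    · rintro rfl
      exact Or.inl h.choose_spec
    · rintro (hn | ⟨rfl, hn⟩)
      · exact jstar_unique hmono h.choose_spec hn
      · exact absurd h hn
  · constructor
    · rintro rfl
      exact Or.inr ⟨rfl, h⟩
    · rintro (hn | ⟨rfl, _⟩)
      · exact absurd ⟨n, hn⟩ h
      · rfl

lemma measurable_jstar {N : ℕ} {x : ℕ → ℝ} (hmono : ∀ j ≤ N, x j ≤ x (j + 1)) :
    Measurable (jstar N x) := by
  apply measurable_to_countable'
  intro n
  have : jstar N x ⁻¹' {n} =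
      ({ξ | n ≤ N ∧ x n ≤ ξ ∧ ξ < x (n + 1)} ∪
       {ξ | n = N ∧ ¬ ∃ j, j ≤ N ∧ x j ≤ ξ ∧ ξ < x (j + 1)}) := by
    ext ξ
    simp only [Set.mem_preimage, Set.mem_singleton_iff, Set.mem_union, Set.mem_setOf_eq]
    rw [jstar_eq_iff hmono]
  rw [this]
  apply MeasurableSet.union
  · by_cases hn : n ≤ N
    · have : {ξ | n ≤ N ∧ x n ≤ ξ ∧ ξ < x (n + 1)} = Set.Ico (x n) (x (n + 1)) := by
        ext ξ; simp [hn, Set.mem_Ico, and_comm]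
      rw [this]; exact measurableSet_Ico
    · have : {ξ : ℝ | n ≤ N ∧ x n ≤ ξ ∧ ξ < x (n + 1)} = ∅ := by
        ext ξ; simp [hn]
      rw [this]; exact MeasurableSet.empty
  · by_cases hn : n = N
    · have : {ξ | n = N ∧ ¬ ∃ j, j ≤ N ∧ x j ≤ ξ ∧ ξ < x (j + 1)} =
          (⋃ j, ⋃ (_ : j ≤ N), Set.Ico (x j) (x (j + 1)))ᶜ := by
        ext ξ
        simp [hn, Set.mem_Ico, and_comm]
      rw [this]
      exact (MeasurableSet.iUnion fun j => MeasurableSet.iUnion fun _ => measurableSet_Ico).compl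
    · have : {ξ : ℝ | n = N ∧ ¬ ∃ j, j ≤ N ∧ x j ≤ ξ ∧ ξ < x (j + 1)} = ∅ := by
        ext ξ; simp [hn]
      rw [this]; exact MeasurableSet.empty

lemma measurable_dualQ {N : ℕ} {x : ℕ → ℝ} (hmono : ∀ j ≤ N, x j ≤ x (j + 1)) :
    Measurable (fun p : ℝ × ℝ => dualQ N x p.1 p.2) := by
  have hg : ∀ j : ℕ, Measurable (fun p : ℝ × ℝ =>
      if x (j + 1) = x j then p.1
      else if p.2 < (x (j + 1) - p.1) / (x (j + 1) - x j) then x j else x (j + 1)) := by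
    intro j
    by_cases hj : x (j + 1) = x j
    · simp only [hj, if_true]; exact measurable_fst
    · simp only [hj, if_false]
      refine Measurable.ite ?_ measurable_const measurable_const
      exact measurableSet_lt measurable_snd
        (((measurable_const.sub measurable_fst)).div measurable_const)
  have key : Measurable (fun q : (ℝ × ℝ) × ℕ =>
      if x (q.2 + 1) = x q.2 then q.1.1
      else if q.1.2 < (x (q.2 + 1) - q.1.1) / (x (q.2 + 1) - x q.2) then x q.2 else x (q.2 + 1)) :=
    measurable_from_prod_countable_left fun j => hg j
  have : (fun p : ℝ × ℝ => dualQ N x p.1 p.2) =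
      (fun q : (ℝ × ℝ) × ℕ =>
        if x (q.2 + 1) = x q.2 then q.1.1
        else if q.1.2 < (x (q.2 + 1) - q.1.1) / (x (q.2 + 1) - x q.2) then x q.2
        else x (q.2 + 1)) ∘ (fun p => (p, jstar N x p.1)) := by
    funext p; rfl
  rw [this]
  exact key.comp (measurable_id.prodMk ((measurable_jstar hmono).comp measurable_fst))

lemma dualQ_mem {N : ℕ} {x : ℕ → ℝ} {a b : ℝ} (hmono : ∀ j ≤ N, x j ≤ x (j + 1))
    (hx0 : x 0 = a) (hxN : x (N + 1) = b) {ξ : ℝ} (hξ : ξ ∈ Set.Icc a b) (lam : ℝ) :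
    dualQ N x ξ lam ∈ Set.Icc a b := by
  unfold dualQ
  have h1 : jstar N x ξ ≤ N + 1 := (jstar_le N x ξ).trans (by omega)
  have h2 : jstar N x ξ + 1 ≤ N + 1 := by have := jstar_le N x ξ; omega
  split_ifs with h h'
  · exact hξ
  · exact x_mem hmono hx0 hxN h1
  · exact x_mem hmono hx0 hxN h2

lemma dualQ_stationary {N : ℕ} {x : ℕ → ℝ} {a b : ℝ} (hmono : ∀ j ≤ N, x j ≤ x (j + 1))
    (hx0 : x 0 = a) (hxN : x (N + 1) = b) {ξ : ℝ} (hξ : ξ ∈ Set.Icc a b) :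
    ∫ lam in Set.Icc (0 : ℝ) 1, (dualQ N x ξ lam - ξ) = 0 := by
  obtain ⟨hu, hv⟩ := jstar_sandwich hmono hx0 hxN hξ
  set j := jstar N x ξ with hj
  set u := x j with hudef
  set v := x (j + 1) with hvdef
  by_cases hvu : v = u
  · have : ∀ lam, dualQ N x ξ lam - ξ = 0 := by
      intro lam; unfold dualQ; rw [← hj, ← hudef, ← hvdef, if_pos hvu]; ring
    simp only [this, integral_zero]
  · have huv : u < v := lt_of_le_of_ne (hmono j (jstar_le N x ξ)) (Ne.symm hvu)
    have hvu0 : (0:ℝ) < v - u := by linarith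
    set θ := (v - ξ) / (v - u) with hθ
    have hθ0 : 0 ≤ θ := div_nonneg (by linarith) hvu0.le
    have hθ1 : θ ≤ 1 := by
      rw [div_le_one hvu0]; linarith
    have hθexp : ∀ lam, dualQ N x ξ lam = if lam < θ then u else v := by
      intro lam; unfold dualQ; rw [← hj, ← hudef, ← hvdef, if_neg hvu]
    have hsplit : Set.Icc (0:ℝ) 1 = Set.Ico 0 θ ∪ Set.Icc θ 1 :=
      (Set.Ico_union_Icc_eq_Icc hθ0 hθ1).symm
    have hdisj : Disjoint (Set.Ico (0:ℝ) θ) (Set.Icc θ 1) := by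
      apply Set.disjoint_left.mpr
      rintro lam ⟨_, h1⟩ ⟨h2, _⟩; linarith
    have h1 : Set.EqOn (fun lam => dualQ N x ξ lam - ξ) (fun _ => u - ξ) (Set.Ico 0 θ) := by
      intro lam hlam; simp only [hθexp, if_pos hlam.2]
    have h2 : Set.EqOn (fun lam => dualQ N x ξ lam - ξ) (fun _ => v - ξ) (Set.Icc θ 1) := by
      intro lam hlam; simp only [hθexp, if_neg (not_lt.mpr hlam.1)]
    have hint1 : IntegrableOn (fun lam => dualQ N x ξ lam - ξ) (Set.Ico 0 θ) := by
      exact (integrableOn_congr_fun h1 measurableSet_Ico).mpr ((integrableOn_const_iff).mpr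
        (Or.inr (by rw [Real.volume_Ico]; exact ENNReal.ofReal_lt_top)))
    have hint2 : IntegrableOn (fun lam => dualQ N x ξ lam - ξ) (Set.Icc θ 1) := by
      exact (integrableOn_congr_fun h2 measurableSet_Icc).mpr ((integrableOn_const_iff).mpr
        (Or.inr (by rw [Real.volume_Icc]; exact ENNReal.ofReal_lt_top)))
    rw [hsplit, setIntegral_union hdisj measurableSet_Icc hint1 hint2,
      setIntegral_congr_fun measurableSet_Ico h1, setIntegral_congr_fun measurableSet_Icc h2,
      setIntegral_const, setIntegral_const, measureReal_def, measureReal_def, Real.volume_Ico, Real.volume_Icc,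
      ENNReal.toReal_ofReal (by linarith), ENNReal.toReal_ofReal (by linarith)]
    simp only [smul_eq_mul, sub_zero, hθ]
    field_simp
    ring

lemma taylor_bound {F : ℝ → ℝ} {L : NNReal} (hF : ContDiff ℝ 1 F)
    (hFlip : LipschitzWith L (deriv F)) (ξ y : ℝ) :
    |F y - F ξ - deriv F ξ * (y - ξ)| ≤ (L : ℝ) * |y - ξ| ^ 2 := by
  set s := Set.uIcc ξ y with hs
  have hconv : Convex ℝ s := convex_uIcc ξ y
  set g : ℝ → ℝ := fun z => F z - deriv F ξ * z with hg
  have hderiv : ∀ z ∈ s, HasDerivWithinAt g (deriv F z - deriv F ξ) s z := by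
    intro z _
    have h1 : HasDerivAt F (deriv F z) z := (hF.differentiable one_ne_zero z).hasDerivAt
    have h2 : HasDerivAt (fun w : ℝ => deriv F ξ * w) (deriv F ξ) z := by
      simpa using (hasDerivAt_id z).const_mul (deriv F ξ)
    exact (h1.sub h2).hasDerivWithinAt
  have hbound : ∀ z ∈ s, ‖deriv F z - deriv F ξ‖ ≤ (L : ℝ) * |y - ξ| := by
    intro z hz
    have h1 : dist (deriv F z) (deriv F ξ) ≤ L * dist z ξ := hFlip.dist_le_mul z ξ
    have h2 : dist z ξ ≤ dist y ξ := by
      rw [Real.dist_eq, Real.dist_eq]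
      rw [hs] at hz
      rcases le_total ξ y with h | h
      · rw [Set.uIcc_of_le h] at hz
        rw [abs_of_nonneg (by linarith [hz.1]), abs_of_nonneg (by linarith)]
        linarith [hz.2]
      · rw [Set.uIcc_of_ge h] at hz
        rw [abs_of_nonpos (by linarith [hz.2]), abs_of_nonpos (by linarith)]
        linarith [hz.1]
    rw [Real.norm_eq_abs, ← Real.dist_eq]
    calc dist (deriv F z) (deriv F ξ) ≤ L * dist z ξ := h1
      _ ≤ (L : ℝ) * dist y ξ := by
          exact mul_le_mul_of_nonneg_left h2 L.coe_nonneg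
      _ = (L : ℝ) * |y - ξ| := by rw [Real.dist_eq]
  have := hconv.norm_image_sub_le_of_norm_hasDerivWithin_le hderiv hbound
    (Set.left_mem_uIcc) (Set.right_mem_uIcc)
  have heq : g y - g ξ = F y - F ξ - deriv F ξ * (y - ξ) := by simp only [hg]; ring
  rw [heq, Real.norm_eq_abs, Real.norm_eq_abs] at this
  calc |F y - F ξ - deriv F ξ * (y - ξ)| ≤ (L : ℝ) * |y - ξ| * |y - ξ| := this
    _ = (L : ℝ) * |y - ξ| ^ 2 := by ring

/-- **Second order estimate for dual quantization.** Let `F : ℝ → ℝ` be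
continuously differentiable with `L`-Lipschitz derivative. Let `X` be a real random variable
with `P(X ∈ [a,b]) = 1` and let `Λ` be uniformly distributed on `[0,1]` and independent of `X`.
Then for every grid `Γ` in `[a,b]`:
`|E F(X) − E F(J_Γ(X,Λ))| ≤ L · E|X − J_Γ(X,Λ)|²`. -/
theorem dualQ_second_order {Ω : Type*} [MeasurableSpace Ω] (P : Measure Ω) [IsProbabilityMeasure P]
    (a b : ℝ) (hab : a < b) (N : ℕ) (x : ℕ → ℝ)
    (hmono : ∀ j ≤ N, x j ≤ x (j + 1)) (hx0 : x 0 = a) (hxN : x (N + 1) = b)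
    (X : Ω → ℝ) (hXmeas : Measurable X) (hXab : ∀ᵐ ω ∂P, X ω ∈ Set.Icc a b)
    (Λ : Ω → ℝ) (hΛmeas : Measurable Λ)
    (hΛ : Measure.map Λ P = volume.restrict (Set.Icc (0 : ℝ) 1))
    (hindep : IndepFun X Λ P)
    (F : ℝ → ℝ) (L : NNReal) (hF : ContDiff ℝ 1 F) (hFlip : LipschitzWith L (deriv F)) :
    |∫ ω, F (X ω) ∂P - ∫ ω, F (dualQ N x (X ω) (Λ ω)) ∂P| ≤
      (L : ℝ) * ∫ ω, |X ω - dualQ N x (X ω) (Λ ω)| ^ 2 ∂P := by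
  classical
  set μΛ : Measure ℝ := volume.restrict (Set.Icc (0 : ℝ) 1) with hμΛdef
  set μX : Measure ℝ := P.map X with hμXdef
  haveI hPX : IsProbabilityMeasure μX := Measure.isProbabilityMeasure_map hXmeas.aemeasurable
  haveI hPΛ : IsProbabilityMeasure μΛ := by
    constructor
    rw [hμΛdef, Measure.restrict_apply MeasurableSet.univ, Set.univ_inter, Real.volume_Icc]
    norm_num
  have pairM : Measurable fun ω => (X ω, Λ ω) := hXmeas.prodMk hΛmeas
  have hmap : P.map (fun ω => (X ω, Λ ω)) = μX.prod μΛ := by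
    rw [← hΛ, hμXdef]
    exact (indepFun_iff_map_prod_eq_prod_map_map hXmeas.aemeasurable hΛmeas.aemeasurable).mp hindep
  set J : ℝ × ℝ → ℝ := fun p => dualQ N x p.1 p.2 with hJdef
  have hJmeas : Measurable J := measurable_dualQ hmono
  have Fmeas : Measurable F := hF.continuous.measurable
  -- bound on F over [a,b]
  obtain ⟨C, hC⟩ := isCompact_Icc.exists_bound_of_continuousOn (f := F)
    hF.continuous.continuousOn (s := Set.Icc a b)
  -- a.e. facts
  have hμXab : ∀ᵐ ξ ∂μX, ξ ∈ Set.Icc a b := by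
    rw [hμXdef]
    exact (ae_map_iff hXmeas.aemeasurable measurableSet_Icc).mpr hXab
  have hνab : ∀ᵐ p ∂(μX.prod μΛ), p.1 ∈ Set.Icc a b := by
    rw [← hmap]
    exact (ae_map_iff pairM.aemeasurable (measurable_fst measurableSet_Icc)).mpr hXab
  -- H and Q
  set H : ℝ × ℝ → ℝ := fun p => F p.1 - F (J p) with hHdef
  have HMeas : Measurable H := (Fmeas.comp measurable_fst).sub (Fmeas.comp hJmeas)
  set Q : ℝ × ℝ → ℝ := fun p => |p.1 - J p| ^ 2 with hQdef
  have QMeas : Measurable Q := ((measurable_fst.sub hJmeas).abs.pow measurable_const)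
  -- integrabilities
  have intH : Integrable H (μX.prod μΛ) := by
    refine ⟨HMeas.aestronglyMeasurable, HasFiniteIntegral.of_bounded (C := C + C) ?_⟩
    filter_upwards [hνab] with p hp
    calc ‖H p‖ ≤ ‖F p.1‖ + ‖F (J p)‖ := norm_sub_le _ _
      _ ≤ C + C := add_le_add (hC _ hp) (hC _ (dualQ_mem hmono hx0 hxN hp p.2))
  have hQle : ∀ p : ℝ × ℝ, p.1 ∈ Set.Icc a b → ‖(L : ℝ) * Q p‖ ≤ (L : ℝ) * (b - a) ^ 2 := by
    intro p hp
    have hJp := dualQ_mem hmono hx0 hxN hp p.2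
    have h1 : |p.1 - J p| ≤ b - a := by
      rw [abs_le]
      constructor <;> [linarith [hp.1, hJp.2]; linarith [hp.2, hJp.1]]
    have h2 : Q p ≤ (b - a) ^ 2 := by
      rw [hQdef]
      exact pow_le_pow_left₀ (abs_nonneg _) h1 2
    rw [Real.norm_eq_abs, abs_mul, NNReal.abs_eq, abs_of_nonneg (by positivity)]
    exact mul_le_mul_of_nonneg_left h2 L.coe_nonneg
  have intLQ : Integrable (fun p => (L : ℝ) * Q p) (μX.prod μΛ) := by
    refine ⟨(measurable_const.mul QMeas).aestronglyMeasurable,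
      HasFiniteIntegral.of_bounded (C := (L : ℝ) * (b - a) ^ 2) ?_⟩
    filter_upwards [hνab] with p hp using hQle p hp
  -- main pointwise (in ξ) bound
  have inner_bound : ∀ ξ ∈ Set.Icc a b,
      ‖∫ lam, H (ξ, lam) ∂μΛ‖ ≤ ∫ lam, (L : ℝ) * Q (ξ, lam) ∂μΛ := by
    intro ξ hξ
    have hDmeas : Measurable fun lam => J (ξ, lam) := hJmeas.comp measurable_prodMk_left
    have hDmem : ∀ lam, J (ξ, lam) ∈ Set.Icc a b := fun lam => dualQ_mem hmono hx0 hxN hξ lam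
    have hzero : ∫ lam, (J (ξ, lam) - ξ) ∂μΛ = 0 := dualQ_stationary hmono hx0 hxN hξ
    have hRbound : ∀ lam, ‖-(F (J (ξ, lam)) - F ξ - deriv F ξ * (J (ξ, lam) - ξ))‖ ≤
        (L : ℝ) * Q (ξ, lam) := by
      intro lam
      rw [Real.norm_eq_abs, abs_neg]
      calc |F (J (ξ, lam)) - F ξ - deriv F ξ * (J (ξ, lam) - ξ)| ≤
            (L : ℝ) * |J (ξ, lam) - ξ| ^ 2 := taylor_bound hF hFlip ξ (J (ξ, lam))
        _ = (L : ℝ) * Q (ξ, lam) := by rw [hQdef]; simp only [abs_sub_comm]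
    have hDb : ∀ lam, |J (ξ, lam) - ξ| ≤ b - a := by
      intro lam
      have := hDmem lam
      rw [abs_le]
      constructor <;> [linarith [hξ.2, (hDmem lam).1]; linarith [hξ.1, (hDmem lam).2]]
    have hintR : Integrable
        (fun lam => -(F (J (ξ, lam)) - F ξ - deriv F ξ * (J (ξ, lam) - ξ))) μΛ := by
      refine ⟨?_, HasFiniteIntegral.of_bounded (C := (L : ℝ) * (b - a) ^ 2) (ae_of_all _ ?_)⟩
      · exact ((((Fmeas.comp hDmeas).sub measurable_const).sub
          (measurable_const.mul (hDmeas.sub measurable_const))).neg).aestronglyMeasurable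
      · intro lam
        refine (hRbound lam).trans ?_
        have h2 : Q (ξ, lam) ≤ (b - a) ^ 2 := by
          rw [hQdef]
          simpa [abs_sub_comm] using pow_le_pow_left₀ (abs_nonneg _) (hDb lam) 2
        exact mul_le_mul_of_nonneg_left h2 L.coe_nonneg
    have hint2 : Integrable (fun lam => (-(deriv F ξ)) * (J (ξ, lam) - ξ)) μΛ := by
      refine ⟨(measurable_const.mul (hDmeas.sub measurable_const)).aestronglyMeasurable,
        HasFiniteIntegral.of_bounded (C := |deriv F ξ| * (b - a)) (ae_of_all _ ?_)⟩
      intro lam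
      rw [Real.norm_eq_abs, abs_mul, abs_neg]
      exact mul_le_mul_of_nonneg_left (hDb lam) (abs_nonneg _)
    have hLQint : Integrable (fun lam => (L : ℝ) * Q (ξ, lam)) μΛ := by
      refine ⟨(measurable_const.mul (((measurable_const.sub hDmeas).abs.pow
        measurable_const))).aestronglyMeasurable,
        HasFiniteIntegral.of_bounded (C := (L : ℝ) * (b - a) ^ 2) (ae_of_all _ ?_)⟩
      intro lam
      exact hQle (ξ, lam) hξ
    have hsplit : (fun lam => H (ξ, lam)) =
        fun lam => (-(F (J (ξ, lam)) - F ξ - deriv F ξ * (J (ξ, lam) - ξ))) +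
          (-(deriv F ξ)) * (J (ξ, lam) - ξ) := by
      funext lam; rw [hHdef]; ring
    rw [hsplit, integral_add hintR hint2, integral_const_mul, hzero, mul_zero, add_zero]
    exact norm_integral_le_of_norm_le hLQint (ae_of_all _ hRbound)
  -- rewrite both sides via the product measure
  have e1 : ∫ ω, F (X ω) ∂P - ∫ ω, F (dualQ N x (X ω) (Λ ω)) ∂P =
      ∫ p, H p ∂(μX.prod μΛ) := by
    have intFX : Integrable (fun ω => F (X ω)) P := by
      refine ⟨(Fmeas.comp hXmeas).aestronglyMeasurable,
        HasFiniteIntegral.of_bounded (C := C) ?_⟩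
      filter_upwards [hXab] with ω hω using hC _ hω
    have intFJ : Integrable (fun ω => F (J (X ω, Λ ω))) P := by
      refine ⟨(Fmeas.comp (hJmeas.comp pairM)).aestronglyMeasurable,
        HasFiniteIntegral.of_bounded (C := C) ?_⟩
      filter_upwards [hXab] with ω hω using hC _ (dualQ_mem hmono hx0 hxN hω (Λ ω))
    rw [← integral_sub intFX intFJ, ← hmap,
      integral_map pairM.aemeasurable HMeas.aestronglyMeasurable]
  have e2 : ∫ ω, |X ω - dualQ N x (X ω) (Λ ω)| ^ 2 ∂P = ∫ p, Q p ∂(μX.prod μΛ) := by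
    rw [← hmap, integral_map pairM.aemeasurable QMeas.aestronglyMeasurable]
  rw [e1, e2, integral_prod _ intH]
  have hg : Integrable (fun ξ => ∫ lam, (L : ℝ) * Q (ξ, lam) ∂μΛ) μX :=
    intLQ.integral_prod_left
  calc |∫ ξ, ∫ lam, H (ξ, lam) ∂μΛ ∂μX| ≤ ∫ ξ, ∫ lam, (L : ℝ) * Q (ξ, lam) ∂μΛ ∂μX := by
        rw [← Real.norm_eq_abs]
        refine norm_integral_le_of_norm_le hg ?_
        filter_upwards [hμXab] with ξ hξ using inner_bound ξ hξ
    _ = ∫ p, (L : ℝ) * Q p ∂(μX.prod μΛ) := (integral_prod _ intLQ).symm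
    _ = (L : ℝ) * ∫ p, Q p ∂(μX.prod μΛ) := integral_const_mul _ _
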